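/- If 0 < p₀ < 1/2, 0 < p₁ < 1/2, and R < 1 − (H(p₀)+H(p₁))/2, then E(R,p₀,p₁) > 0. -/
import Mathlib

open Real Set

/-- Binary entropy function (base 2), with `0 * log 0 = 0`. -/
noncomputable def binH (x : ℝ) : ℝ := -(x * Real.logb 2 x) - (1 - x) * Real.logb 2 (1 - x)

/-- Binary Kullback–Leibler divergence (base 2). -/
noncomputable def binD (q p : ℝ) : ℝ :=
  q * Real.logb 2 (q / p) + (1 - q) * Real.logb 2 ((1 - q) / (1 - p))

/-- The error exponent `E(R,p₀,p₁)`: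
`min_{q₀,q₁ ∈ [0,1]} [(D(q₁‖p₁)+D(q₀‖p₀))/2 + |1 − R − (H(q₀)+H(q₁))/2|⁺]`. -/
noncomputable def Eexp (R p0 p1 : ℝ) : ℝ :=
  sInf {v : ℝ | ∃ q0 ∈ Set.Icc (0:ℝ) 1, ∃ q1 ∈ Set.Icc (0:ℝ) 1,
    v = (binD q1 p1 + binD q0 p0) / 2 + max (1 - R - (binH q0 + binH q1) / 2) 0}

lemma log2_pos : (0:ℝ) < Real.log 2 := Real.log_pos one_lt_two

lemma binD_eq (q p : ℝ) : binD q p =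
    (q * Real.log (q/p) + (1-q) * Real.log ((1-q)/(1-p))) / Real.log 2 := by
  simp [binD, Real.logb]; ring

lemma term_ge {q p : ℝ} (hq0 : 0 ≤ q) (hp0 : 0 < p) :
    q - p ≤ q * Real.log (q/p) := by
  rcases eq_or_lt_of_le hq0 with h | h
  · simp [← h]; linarith
  · have hlog : Real.log (p/q) ≤ p/q - 1 := Real.log_le_sub_one_of_pos (by positivity)
    have hq' : q ≠ 0 := ne_of_gt h
    have hl : Real.log (q/p) = - Real.log (p/q) := by
      rw [Real.log_div hq' (ne_of_gt hp0), Real.log_div (ne_of_gt hp0) hq']; ring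
    have h2 : q * (p/q - 1) = p - q := by field_simp
    have h3 := mul_le_mul_of_nonneg_left hlog (le_of_lt h)
    rw [hl]; linarith

lemma term_gt {q p : ℝ} (hq0 : 0 < q) (hp0 : 0 < p) (hne : q ≠ p) :
    q - p < q * Real.log (q/p) := by
  have hne' : p / q ≠ 1 := by
    intro hh
    exact hne ((div_eq_one_iff_eq (ne_of_gt hq0)).mp hh).symm
  have hlog : Real.log (p/q) < p/q - 1 := Real.log_lt_sub_one_of_pos (by positivity) hne'
  have hq' : q ≠ 0 := ne_of_gt hq0
  have hl : Real.log (q/p) = - Real.log (p/q) := by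
    rw [Real.log_div hq' (ne_of_gt hp0), Real.log_div (ne_of_gt hp0) hq']; ring
  have h2 : q * (p/q - 1) = p - q := by field_simp
  have h3 := mul_lt_mul_of_pos_left hlog hq0
  rw [hl]; linarith

lemma binD_nonneg {q p : ℝ} (hq0 : 0 ≤ q) (hq1 : q ≤ 1) (hp0 : 0 < p) (hp1 : p < 1) :
    0 ≤ binD q p := by
  rw [binD_eq]
  apply div_nonneg _ log2_pos.le
  have t1 := term_ge hq0 hp0
  have t2 := term_ge (q := 1-q) (p := 1-p) (by linarith) (by linarith)
  linarith

lemma binD_pos {q p : ℝ} (hq0 : 0 ≤ q) (hq1 : q ≤ 1) (hp0 : 0 < p) (hp1 : p < 1)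
    (hne : q ≠ p) : 0 < binD q p := by
  rw [binD_eq]
  apply div_pos _ log2_pos
  rcases eq_or_lt_of_le hq0 with h | h
  · have hlp : Real.log (1-p) < 0 := Real.log_neg (by linarith) (by linarith)
    have h1 : Real.log ((1-(0:ℝ))/(1-p)) = - Real.log (1-p) := by
      rw [show (1-(0:ℝ))/(1-p) = (1-p)⁻¹ by ring, Real.log_inv]
    rw [← h, h1]
    nlinarith
  · rcases eq_or_lt_of_le hq1 with h' | h'
    · subst h'
      have : Real.log p < 0 := Real.log_neg hp0 (by linarith)
      simp [Real.log_div one_ne_zero (ne_of_gt hp0)]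
      linarith
    · have t1 := term_gt h hp0 hne
      have t2 := term_ge (q := 1-q) (p := 1-p) (by linarith) (by linarith)
      linarith

lemma binD_self {p : ℝ} (hp0 : 0 < p) (hp1 : p < 1) : binD p p = 0 := by
  unfold binD
  rw [div_self (ne_of_gt hp0), div_self (ne_of_gt (by linarith : (0:ℝ) < 1 - p)),
    Real.logb_one]
  ring

lemma binH_cont : Continuous binH := by
  have h : binH = fun x => (-(x * Real.log x) - (1-x) * Real.log (1-x)) / Real.log 2 := by
    funext x; simp [binH, Real.logb]; ring
  rw [h]
  exact (Real.continuous_mul_log.neg.sub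
    (Real.continuous_mul_log.comp (continuous_const.sub continuous_id))).div_const _

lemma binD_contOn {p : ℝ} (hp0 : 0 < p) (hp1 : p < 1) :
    ContinuousOn (fun q => binD q p) (Icc 0 1) := by
  have heq : EqOn (fun q => binD q p)
      (fun q => ((q * Real.log q - q * Real.log p) +
        ((1-q) * Real.log (1-q) - (1-q) * Real.log (1-p))) / Real.log 2) (Icc 0 1) := by
    intro q hq
    simp only []
    show binD q p = _
    rw [binD_eq]
    have h1 : q * Real.log (q/p) = q * Real.log q - q * Real.log p := by
      rcases eq_or_lt_of_le hq.1 with h | h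
      · simp [← h]
      · rw [Real.log_div (ne_of_gt h) (ne_of_gt hp0)]; ring
    have h2 : (1-q) * Real.log ((1-q)/(1-p)) = (1-q) * Real.log (1-q) - (1-q) * Real.log (1-p) := by
      rcases eq_or_lt_of_le hq.2 with h | h
      · simp [h]
      · rw [Real.log_div (ne_of_gt (by linarith)) (ne_of_gt (by linarith : (0:ℝ) < 1-p))]; ring
    rw [h1, h2]
  refine ContinuousOn.congr ?_ heq
  refine Continuous.continuousOn ?_
  apply Continuous.div_const
  exact ((Real.continuous_mul_log.sub (continuous_id.mul continuous_const)).add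
    ((Real.continuous_mul_log.comp (continuous_const.sub continuous_id)).sub
      ((continuous_const.sub continuous_id).mul continuous_const)))

/-- if `R < 1 − (H(p₀)+H(p₁))/2` then `E(R,p₀,p₁) > 0`. -/
theorem stmt1 (p0 p1 R : ℝ) (hp00 : 0 < p0) (hp01 : p0 < 1/2)
    (hp10 : 0 < p1) (hp11 : p1 < 1/2) (hR0 : 0 ≤ R) (hR1 : R ≤ 1)
    (hR : R < 1 - (binH p0 + binH p1) / 2) :
    0 < Eexp R p0 p1 := by
  set F : ℝ × ℝ → ℝ := fun q =>
    (binD q.2 p1 + binD q.1 p0) / 2 + max (1 - R - (binH q.1 + binH q.2) / 2) 0 with hF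
  have hSet : {v : ℝ | ∃ q0 ∈ Set.Icc (0:ℝ) 1, ∃ q1 ∈ Set.Icc (0:ℝ) 1,
      v = (binD q1 p1 + binD q0 p0) / 2 + max (1 - R - (binH q0 + binH q1) / 2) 0}
      = F '' (Icc (0:ℝ) 1 ×ˢ Icc (0:ℝ) 1) := by
    ext v
    constructor
    · rintro ⟨q0, h0, q1, h1, rfl⟩
      exact ⟨(q0, q1), ⟨h0, h1⟩, rfl⟩
    · rintro ⟨⟨q0, q1⟩, ⟨h0, h1⟩, rfl⟩
      exact ⟨q0, h0, q1, h1, rfl⟩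
  have hFcont : ContinuousOn F (Icc (0:ℝ) 1 ×ˢ Icc (0:ℝ) 1) := by
    apply ContinuousOn.add
    · apply ContinuousOn.div_const
      apply ContinuousOn.add
      · exact ContinuousOn.comp (binD_contOn hp10 (show p1 < 1 by linarith))
          continuous_snd.continuousOn (fun x hx => hx.2)
      · exact ContinuousOn.comp (binD_contOn hp00 (show p0 < 1 by linarith))
          continuous_fst.continuousOn (fun x hx => hx.1)
    · exact ((continuous_const.sub (((binH_cont.comp continuous_fst).add
        (binH_cont.comp continuous_snd)).div_const 2)).max continuous_const).continuousOn
  have hcomp : IsCompact (F '' (Icc (0:ℝ) 1 ×ˢ Icc (0:ℝ) 1)) :=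
    (isCompact_Icc.prod isCompact_Icc).image_of_continuousOn hFcont
  have hne : (F '' (Icc (0:ℝ) 1 ×ˢ Icc (0:ℝ) 1)).Nonempty :=
    ((nonempty_Icc.mpr zero_le_one).prod (nonempty_Icc.mpr zero_le_one)).image F
  have hmem := hcomp.sInf_mem hne
  rw [Eexp, hSet]
  obtain ⟨⟨q0, q1⟩, ⟨hq0, hq1⟩, heq⟩ := hmem
  rw [← heq]
  -- positivity of F (q0, q1)
  have hmax0 : (0:ℝ) ≤ max (1 - R - (binH q0 + binH q1) / 2) 0 := le_max_right _ _
  by_cases hc0 : q0 = p0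
  · by_cases hc1 : q1 = p1
    · subst hc0; subst hc1
      have h1 : binD q0 q0 = 0 := binD_self hp00 (by linarith)
      have h2 : binD q1 q1 = 0 := binD_self hp10 (by linarith)
      have h3 : 0 < 1 - R - (binH q0 + binH q1) / 2 := by linarith
      have h4 : 1 - R - (binH q0 + binH q1) / 2 ≤ max (1 - R - (binH q0 + binH q1) / 2) 0 :=
        le_max_left _ _
      simp only [hF, h1, h2]
      linarith
    · have h1 : 0 < binD q1 p1 := binD_pos hq1.1 hq1.2 hp10 (by linarith) hc1
      have h2 : 0 ≤ binD q0 p0 := binD_nonneg hq0.1 hq0.2 hp00 (by linarith)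
      simp only [hF]
      linarith
  · have h1 : 0 < binD q0 p0 := binD_pos hq0.1 hq0.2 hp00 (by linarith) hc0
    have h2 : 0 ≤ binD q1 p1 := binD_nonneg hq1.1 hq1.2 hp10 (by linarith)
    simp only [hF]
    linarith
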